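/- Let f : V → F_2 be a non-degenerate quadratic form on an F_2-vector space V of dimension n, and let W ⊆ V be a maximal totally isotropic subspace (f(w)=0 for all w ∈ W, maximal with this property). Then dim W = n/2 if f is hyperbolic, (n-1)/2 if f is parabolic, and (n-2)/2 if f is elliptic. -/

import Mathlib

noncomputable section

open Finset

variable {V : Type*} [AddCommGroup V] [Module (ZMod 2) V]

/-- The polar form of `f`. -/
def polarF (f : V → ZMod 2) (x y : V) : ZMod 2 := f (x + y) + f x + f y

/-- `f` is a quadratic form over `F_2`: `f 0 = 0` and the polar form is biadditive
(over `F_2` this means bilinear). -/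
def IsQuadForm (f : V → ZMod 2) : Prop :=
  f 0 = 0 ∧ (∀ x y z : V, polarF f (x + y) z = polarF f x z + polarF f y z) ∧
    (∀ x y z : V, polarF f x (y + z) = polarF f x y + polarF f x z)

/-- The standard sum of pairs `∑ x_i y_i`. -/
def PairsForm (v : ℕ) (p : (Fin v → ZMod 2) × (Fin v → ZMod 2)) : ZMod 2 :=
  ∑ i, p.1 i * p.2 i

/-- `f` is equivalent to `∑_{i=1}^v x_i y_i`. -/
def IsHyperbolic (f : V → ZMod 2) : Prop :=
  ∃ (v : ℕ) (e : V ≃ₗ[ZMod 2] ((Fin v → ZMod 2) × (Fin v → ZMod 2))),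
    ∀ x, f x = PairsForm v (e x)

/-- `f` is equivalent to `z + ∑_{i=1}^v x_i y_i`. -/
def IsParabolic (f : V → ZMod 2) : Prop :=
  ∃ (v : ℕ) (e : V ≃ₗ[ZMod 2] (ZMod 2 × ((Fin v → ZMod 2) × (Fin v → ZMod 2)))),
    ∀ x, f x = (e x).1 + PairsForm v (e x).2

/-- `f` is equivalent to `x_1² + x_1 y_1 + y_1² + ∑_{i=2}^v x_i y_i`. -/
def IsElliptic (f : V → ZMod 2) : Prop :=
  ∃ (v : ℕ) (e : V ≃ₗ[ZMod 2] ((ZMod 2 × ZMod 2) × ((Fin v → ZMod 2) × (Fin v → ZMod 2)))),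
    ∀ x, f x = (e x).1.1 ^ 2 + (e x).1.1 * (e x).1.2 + (e x).1.2 ^ 2 + PairsForm v (e x).2

/-- The radical of the quadratic form `f`: `rad(B_f) ∩ f⁻¹(0)`. -/
def radical (f : V → ZMod 2) : Set V := {x : V | (∀ y : V, polarF f x y = 0) ∧ f x = 0}

/-! ### Auxiliary material -/

/-- The sign character of `F_2`. -/
def eps (a : ZMod 2) : ℤ := if a = 0 then 1 else -1

lemma eps_add' : ∀ a b : ZMod 2, eps (a + b) = eps a * eps b := by decide

lemma sum_eps_eq_zero {M : Type*} [Fintype M] (g : M → ZMod 2) (σ : Equiv.Perm M)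
    (h : ∀ m, g (σ m) = g m + 1) : ∑ m, eps (g m) = 0 := by
  have h1 : ∑ m, eps (g m) = ∑ m, eps (g (σ m)) := (Equiv.sum_comp σ (fun m => eps (g m))).symm
  have h2 : ∑ m, eps (g (σ m)) = -∑ m, eps (g m) := by
    rw [← Finset.sum_neg_distrib]
    refine Finset.sum_congr rfl fun m _ => ?_
    rw [h m, eps_add']; simp [eps]
  linarith [h1, h2]

lemma sum_eps_pairs (v : ℕ) :
    ∑ p : (Fin v → ZMod 2) × (Fin v → ZMod 2), eps (PairsForm v p) = 2 ^ v := by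
  rw [Fintype.sum_prod_type]
  have key : ∀ x : Fin v → ZMod 2,
      (∑ y : Fin v → ZMod 2, eps (PairsForm v (x, y))) = if x = 0 then (2:ℤ)^v else 0 := by
    intro x
    by_cases hx : x = 0
    · subst hx
      simp only [if_pos rfl, PairsForm]
      have : ∀ y : Fin v → ZMod 2, (∑ i, (0 : Fin v → ZMod 2) i * y i) = 0 := by
        intro y; simp
      simp only [this]
      simp [eps, Finset.card_univ]
    · rw [if_neg hx]
      obtain ⟨j, hj⟩ := Function.ne_iff.mp hx
      have hxj : x j = 1 := by
        have : ∀ a : ZMod 2, a ≠ 0 → a = 1 := by decide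
        exact this _ hj
      set z : Fin v → ZMod 2 := Pi.single j 1 with hz
      apply sum_eps_eq_zero (fun y => PairsForm v (x, y)) (Equiv.addRight z)
      intro y
      simp only [Equiv.coe_addRight, PairsForm]
      have h1 : ∀ i, x i * (y + z) i = x i * y i + x i * z i := fun i => by
        simp [mul_add]
      rw [Finset.sum_congr rfl fun i _ => h1 i, Finset.sum_add_distrib]
      congr 1
      rw [Finset.sum_eq_single j]
      · simp [hz, hxj]
      · intro i _ hij; simp [hz, Pi.single_apply, hij]
      · simp
  rw [Finset.sum_congr rfl fun x _ => key x]
  simp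

lemma two_pow_add_aux {a b c : ℕ} (hab : a < b) (h : 2^a + 2^b = 2^c) : False := by
  set m := b - a with hm
  have hb : b = a + m := by omega
  have hm1 : m ≠ 0 := by omega
  rw [hb, pow_add] at h
  have key : 2^a * (1 + 2^m) = 2^c := by rw [mul_add, mul_one]; linarith
  have hdvd : (1 + 2^m) ∣ 2^c := ⟨2^a, by rw [← key]; ring⟩
  have h2m : 2 ∣ 2^m := dvd_pow_self 2 hm1
  have hodd : ¬ 2 ∣ (1 + 2^m) := by omega
  have hcop : Nat.Coprime (1 + 2^m) 2 :=
    Nat.coprime_comm.mp ((Nat.Prime.coprime_iff_not_dvd Nat.prime_two).mpr hodd)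
  have hone : 1 + 2^m = 1 := Nat.Coprime.eq_one_of_dvd (hcop.pow_right c) hdvd
  have : 0 < 2^m := pow_pos (by norm_num) m
  omega

lemma two_pow_add {a b c : ℕ} (h : 2^a + 2^b = 2^c) : a = b := by
  rcases lt_trichotomy a b with h' | h' | h'
  · exact (two_pow_add_aux h' h).elim
  · exact h'
  · exact (two_pow_add_aux h' (by rw [add_comm] at h; exact h)).elim

lemma main_count [Fintype V] {n : ℕ}
    (hn : Module.finrank (ZMod 2) V = n)
    (f : V → ZMod 2) (hf : IsQuadForm f)
    (hnd : radical f = {0})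
    (W : Submodule (ZMod 2) V)
    (hiso : ∀ w ∈ W, f w = 0)
    (hmax : ∀ W' : Submodule (ZMod 2) V, (∀ w ∈ W', f w = 0) → W ≤ W' → W' = W) :
    ∃ k : ℕ, Module.finrank (ZMod 2) W ≤ k ∧ Module.finrank (ZMod 2) W + k = n ∧
      (∑ x : V, eps (f x)) = 2 * 2 ^ (Module.finrank (ZMod 2) W) - 2 ^ k := by
  classical
  set d := Module.finrank (ZMod 2) W with hd
  haveI : Fintype W := Fintype.ofFinite W
  have ne_zero1 : ∀ a : ZMod 2, a ≠ 0 → a = 1 := by decide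
  have Bsymm : ∀ x y : V, polarF f x y = polarF f y x := by
    intro x y; unfold polarF; rw [add_comm x y]; ring
  have Bx0 : ∀ x : V, polarF f x 0 = 0 := by
    intro x; unfold polarF
    rw [add_zero, hf.1, add_zero]
    have : ∀ a : ZMod 2, a + a = 0 := by decide
    exact this _
  have fadd : ∀ x y : V, f (x + y) = f x + f y + polarF f x y := by
    intro x y
    have h3 : ∀ a b c : ZMod 2, a = b + c + (a + b + c) := by decide
    exact h3 (f (x + y)) (f x) (f y)
  haveI : FiniteDimensional (ZMod 2) V := Module.Finite.of_basis (Module.finBasis _ _)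
  have cardW : Fintype.card W = 2 ^ d := by
    rw [Module.card_eq_pow_finrank (K := ZMod 2), ZMod.card]
  have cardV : Fintype.card V = 2 ^ n := by
    rw [Module.card_eq_pow_finrank (K := ZMod 2), ZMod.card, hn]
  -- the sum over W of eps of a linear functional
  have hWsum : ∀ x : V, (∑ w : W, eps (polarF f x w)) =
      if ∀ w ∈ W, polarF f x w = 0 then (2:ℤ) ^ d else 0 := by
    intro x
    by_cases hx : ∀ w ∈ W, polarF f x w = 0
    · rw [if_pos hx]
      have h1 : ∀ w : W, eps (polarF f x w) = 1 := fun w => by rw [hx w w.2]; rfl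
      rw [Finset.sum_congr rfl fun w _ => h1 w]
      simp [Finset.card_univ, cardW]
    · rw [if_neg hx]
      push_neg at hx
      obtain ⟨w₀, hw₀W, hw₀⟩ := hx
      apply sum_eps_eq_zero (fun w : W => polarF f x w) (Equiv.addRight (⟨w₀, hw₀W⟩ : W))
      intro w
      simp only [Equiv.coe_addRight]
      have hcoe : ((w + ⟨w₀, hw₀W⟩ : W) : V) = (w : V) + w₀ := rfl
      rw [hcoe, hf.2.2, ne_zero1 _ hw₀]
  have hVsum : ∀ w : V, w ∈ W → (∑ x : V, eps (polarF f x w)) =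
      if w = 0 then (2:ℤ) ^ n else 0 := by
    intro w hw
    by_cases hw0 : w = 0
    · subst hw0
      rw [if_pos rfl]
      simp only [Bx0]
      simp [eps, Finset.card_univ, cardV]
    · rw [if_neg hw0]
      have hnall : ¬ ∀ x : V, polarF f x w = 0 := by
        intro hall
        apply hw0
        have hrad : w ∈ radical f := ⟨fun y => by rw [Bsymm]; exact hall y, hiso w hw⟩
        rw [hnd] at hrad
        exact hrad
      push_neg at hnall
      obtain ⟨x₀, hx₀⟩ := hnall
      apply sum_eps_eq_zero (fun x => polarF f x w) (Equiv.addRight x₀)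
      intro x
      simp only [Equiv.coe_addRight]
      rw [hf.2.1, ne_zero1 _ hx₀]
  set P : Finset V := Finset.univ.filter (fun x => ∀ w ∈ W, polarF f x w = 0) with hP
  -- first double count : |P| * 2^d = 2^n
  have count1 : (2:ℤ) ^ d * P.card = 2 ^ n := by
    have lhs : ∑ x : V, ∑ w : W, eps (polarF f x w) = (P.card : ℤ) * 2 ^ d := by
      rw [Finset.sum_congr rfl fun x _ => hWsum x, ← Finset.sum_filter, Finset.sum_const,
        nsmul_eq_mul]
    have rhs : ∑ x : V, ∑ w : W, eps (polarF f x w) = (2:ℤ) ^ n := by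
      rw [Finset.sum_comm]
      rw [Finset.sum_congr rfl fun (w : W) _ => hVsum w w.2]
      simp only [Submodule.coe_eq_zero]
      rw [Finset.sum_ite_eq' Finset.univ (0 : W) (fun _ => (2:ℤ)^n)]
      simp
    rw [← rhs, lhs]; ring
  -- second double count : S = ∑_{x ∈ P} eps (f x)
  have count2 : ∑ x : V, eps (f x) = ∑ x ∈ P, eps (f x) := by
    have swap2 : ∑ x : V, ∑ w : W, eps (f (x + w)) = (Fintype.card W : ℤ) * ∑ x : V, eps (f x) := by
      rw [Finset.sum_comm]
      have h1 : ∀ w : W, (∑ x : V, eps (f (x + (w:V)))) = ∑ x : V, eps (f x) := fun w =>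
        Equiv.sum_comp (Equiv.addRight (w : V)) (fun x => eps (f x))
      rw [Finset.sum_congr rfl fun w _ => h1 w, Finset.sum_const, nsmul_eq_mul, Finset.card_univ]
    have expand : ∀ (x : V) (w : W), eps (f (x + w)) = eps (f x) * eps (polarF f x w) := by
      intro x w
      rw [fadd, hiso w w.2, add_zero, eps_add']
    have lhs2 : ∑ x : V, ∑ w : W, eps (f (x + w)) = (2:ℤ) ^ d * ∑ x ∈ P, eps (f x) := by
      have inner : ∀ x : V, (∑ w : W, eps (f (x + w))) =
          eps (f x) * (if ∀ w ∈ W, polarF f x w = 0 then (2:ℤ)^d else 0) := by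
        intro x
        rw [Finset.sum_congr rfl fun w _ => expand x w, ← Finset.mul_sum, hWsum x]
      rw [Finset.sum_congr rfl fun x _ => inner x]
      have h2 : ∀ x : V, eps (f x) * (if ∀ w ∈ W, polarF f x w = 0 then (2:ℤ)^d else 0) =
          if ∀ w ∈ W, polarF f x w = 0 then (2:ℤ)^d * eps (f x) else 0 := by
        intro x; split <;> ring
      rw [Finset.sum_congr rfl fun x _ => h2 x, ← Finset.sum_filter, ← Finset.mul_sum]
    have heq := lhs2.symm.trans swap2
    rw [cardW] at heq
    push_cast at heq
    have h2d : (2:ℤ)^d ≠ 0 := by positivity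
    exact (mul_left_cancel₀ h2d (heq.symm ▸ rfl : (2:ℤ)^d * ∑ x ∈ P, eps (f x) = (2:ℤ)^d * ∑ x : V, eps (f x))).symm
  -- the zeros of f inside P are exactly W
  set Zs : Finset V := P.filter (fun x => f x = 0) with hZs
  have hZW : ∀ x : V, x ∈ Zs ↔ x ∈ W := by
    intro x
    rw [hZs, Finset.mem_filter, hP, Finset.mem_filter]
    simp only [Finset.mem_univ, true_and]
    constructor
    · rintro ⟨hperp, hfx⟩
      have hiso' : ∀ y ∈ W ⊔ (ZMod 2) ∙ x, f y = 0 := by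
        intro y hy
        obtain ⟨w, hwW, s, hs, rfl⟩ := Submodule.mem_sup.mp hy
        obtain ⟨c, rfl⟩ := Submodule.mem_span_singleton.mp hs
        have hc : c = 0 ∨ c = 1 := (by decide : ∀ c : ZMod 2, c = 0 ∨ c = 1) c
        rcases hc with rfl | rfl
        · rw [zero_smul, add_zero]; exact hiso w hwW
        · rw [one_smul, fadd, hiso w hwW, hfx, Bsymm, hperp w hwW]; rfl
      have hWeq := hmax _ hiso' le_sup_left
      have hx : x ∈ W ⊔ (ZMod 2) ∙ x :=
        Submodule.mem_sup_right (Submodule.mem_span_singleton_self x)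
      rw [hWeq] at hx
      exact hx
    · intro hx
      refine ⟨fun w hw => ?_, hiso x hx⟩
      show f (x + w) + f x + f w = 0
      rw [hiso _ (W.add_mem hx hw), hiso _ hx, hiso _ hw, add_zero, add_zero]
  have cardZs : Zs.card = 2 ^ d := by
    rw [← cardW]
    exact (Fintype.card_of_finset' Zs (fun x => hZW x)).symm
  -- value of the sum over P
  have epsval : ∀ a : ZMod 2, eps a = 2 * (if a = 0 then (1:ℤ) else 0) - 1 := by decide
  have sumP : ∑ x ∈ P, eps (f x) = 2 * (Zs.card : ℤ) - P.card := by
    rw [Finset.sum_congr rfl fun x _ => epsval (f x), Finset.sum_sub_distrib,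
      ← Finset.mul_sum, Finset.sum_boole, Finset.sum_const]
    simp [hZs]
  -- extract k
  have count1' : 2 ^ d * P.card = 2 ^ n := by exact_mod_cast count1
  have hPdvd : P.card ∣ 2 ^ n := ⟨2 ^ d, by rw [← count1']; ring⟩
  obtain ⟨k, hkn, hk⟩ := (Nat.dvd_prime_pow Nat.prime_two).mp hPdvd
  have hdk : d + k = n := by
    have : 2 ^ (d + k) = 2 ^ n := by rw [pow_add, ← hk]; exact count1'
    exact Nat.pow_right_injective (by norm_num) this
  have hle : d ≤ k := by
    have h1 : Zs.card ≤ P.card := Finset.card_le_card (Finset.filter_subset _ _)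
    rw [cardZs, hk] at h1
    exact (Nat.pow_le_pow_iff_right (by norm_num)).mp h1
  refine ⟨k, hle, hdk, ?_⟩
  rw [count2, sumP, cardZs, hk]
  push_cast
  ring

theorem stmt11 [FiniteDimensional (ZMod 2) V] {n : ℕ}
    (hn : Module.finrank (ZMod 2) V = n)
    (f : V → ZMod 2) (hf : IsQuadForm f)
    (hnd : radical f = {0})
    (W : Submodule (ZMod 2) V)
    (hiso : ∀ w ∈ W, f w = 0)
    (hmax : ∀ W' : Submodule (ZMod 2) V, (∀ w ∈ W', f w = 0) → W ≤ W' → W' = W) :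
    (IsHyperbolic f → 2 * Module.finrank (ZMod 2) W = n) ∧
    (IsParabolic f → 2 * Module.finrank (ZMod 2) W + 1 = n) ∧
    (IsElliptic f → 2 * Module.finrank (ZMod 2) W + 2 = n) := by
  classical
  haveI : Finite V := Module.finite_of_finite (ZMod 2)
  haveI : Fintype V := Fintype.ofFinite V
  obtain ⟨k, hdk, hdkn, hS⟩ := main_count hn f hf hnd W hiso hmax
  set d := Module.finrank (ZMod 2) W with hd
  refine ⟨?_, ?_, ?_⟩
  · rintro ⟨v, e, he⟩
    have hnv : n = v + v := by
      rw [← hn, LinearEquiv.finrank_eq e]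
      simp [Module.finrank_prod, Module.finrank_pi]
    have hSval : (∑ x : V, eps (f x)) = 2 ^ v := by
      rw [Finset.sum_congr rfl fun x _ => by rw [he x]]
      rw [← sum_eps_pairs v]
      exact Equiv.sum_comp e.toEquiv (fun p => eps (PairsForm v p))
    rw [hS] at hSval
    have h2 : d = k := by
      by_contra hne
      have hlt : d + 1 ≤ k := by omega
      have hp : (2:ℤ)^(d+1) ≤ 2^k := pow_le_pow_right₀ one_le_two hlt
      have hpos : (0:ℤ) < 2^v := by positivity
      have hr : (2:ℤ) * 2^d = 2^(d+1) := by ring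
      linarith
    omega
  · rintro ⟨v, e, he⟩
    have hnv : n = 1 + (v + v) := by
      rw [← hn, LinearEquiv.finrank_eq e]
      simp [Module.finrank_prod, Module.finrank_pi]
    have hSval : (∑ x : V, eps (f x)) = 0 := by
      rw [Finset.sum_congr rfl fun x _ => by rw [he x]]
      rw [show (∑ x : V, eps ((e x).1 + PairsForm v (e x).2)) =
          ∑ p : ZMod 2 × ((Fin v → ZMod 2) × (Fin v → ZMod 2)), eps (p.1 + PairsForm v p.2) from
        Equiv.sum_comp e.toEquiv (fun p => eps (p.1 + PairsForm v p.2))]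
      apply sum_eps_eq_zero _ (Equiv.addLeft ((1 : ZMod 2), (0 : (Fin v → ZMod 2) × (Fin v → ZMod 2))))
      intro p
      simp only [Equiv.coe_addLeft, Prod.fst_add, Prod.snd_add, zero_add]
      ring
    rw [hS] at hSval
    have hZeq : (2:ℤ)^(d+1) = 2^k := by rw [pow_succ]; linarith
    have hNeq : 2^(d+1) = 2^k := by exact_mod_cast hZeq
    have : d + 1 = k := Nat.pow_right_injective (by norm_num) hNeq
    omega
  · rintro ⟨v, e, he⟩
    have hnv : n = 2 + (v + v) := by
      rw [← hn, LinearEquiv.finrank_eq e]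
      simp [Module.finrank_prod, Module.finrank_pi]
    have hSval : (∑ x : V, eps (f x)) = -2 * 2 ^ v := by
      rw [Finset.sum_congr rfl fun x _ => by rw [he x]]
      rw [show (∑ x : V, eps ((e x).1.1 ^ 2 + (e x).1.1 * (e x).1.2 + (e x).1.2 ^ 2 +
            PairsForm v (e x).2)) =
          ∑ p : (ZMod 2 × ZMod 2) × ((Fin v → ZMod 2) × (Fin v → ZMod 2)),
            eps (p.1.1 ^ 2 + p.1.1 * p.1.2 + p.1.2 ^ 2 + PairsForm v p.2) from
        Equiv.sum_comp e.toEquiv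
          (fun p => eps (p.1.1 ^ 2 + p.1.1 * p.1.2 + p.1.2 ^ 2 + PairsForm v p.2))]
      rw [Fintype.sum_prod_type]
      have h1 : ∀ (q : ZMod 2 × ZMod 2) (p : (Fin v → ZMod 2) × (Fin v → ZMod 2)),
          eps (q.1 ^ 2 + q.1 * q.2 + q.2 ^ 2 + PairsForm v p) =
          eps (q.1 ^ 2 + q.1 * q.2 + q.2 ^ 2) * eps (PairsForm v p) := fun q p => eps_add' _ _
      rw [Finset.sum_congr rfl fun q _ => Finset.sum_congr rfl fun p _ => h1 q p]
      rw [Finset.sum_congr rfl fun q (_ : q ∈ Finset.univ) => (Finset.mul_sum _ _ _).symm]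
      rw [← Finset.sum_mul, sum_eps_pairs]
      have h2 : (∑ q : ZMod 2 × ZMod 2, eps (q.1 ^ 2 + q.1 * q.2 + q.2 ^ 2)) = -2 := by decide
      rw [h2]
    rw [hS] at hSval
    have hZeq : (2:ℤ)^k = 2^(d+1) + 2^(v+1) := by rw [pow_succ, pow_succ]; linarith
    have hNeq : 2^k = 2^(d+1) + 2^(v+1) := by exact_mod_cast hZeq
    have hdv : d + 1 = v + 1 := two_pow_add hNeq.symm
    have hkv : k = v + 2 := by
      have hdv' : d = v := Nat.succ_injective hdv
      have : (2:ℕ)^k = 2^(v+2) := by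
        rw [hNeq, hdv']
        ring
      exact Nat.pow_right_injective (by norm_num) this
    omega
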